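/- arXiv:1604.06568 — 2 statements merged into one kernel-verified Lean document; each statement's English description precedes it below -/
import Mathlib

section
/- Suppose the neighborhood system on the finite sample space 𝒴 is determined by the undirected graph G = (𝒴, E), and let 𝒴₀ ⊆ 𝒴 be a subset such that ⋃_{y∈𝒴₀} b(y) = 𝒴. Define the graph G₀' = (𝒴₀, E₀') by (y, y') ∈ E₀' if and only if y ≠ y' and b(y) ∩ b(y') ≠ ∅. Fix γ > 0 and suppose every local potential φ_y (y ∈ 𝒴₀) is the local pseudo-spherical potential φ_y(f) = (Σ_{z∈b(y)} f_z^{1+γ})^{1/(1+γ)}. If G₀' is connected, then the composite local Bregman divergence D_Φ satisfies the coincidence axiom on 𝒫: for all p, q ∈ 𝒫, D_Φ(p, q) = 0 implies p = q. -/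
open scoped BigOperators

noncomputable def bregman {A : Type*} [Fintype A] [DecidableEq A]
    (φ : (A → ℝ) → ℝ) (f g : A → ℝ) : ℝ :=
  φ f - φ g - ∑ a, fderiv ℝ φ g (Pi.single a 1) * (f a - g a)

def posOrth (A : Type*) : Set (A → ℝ) := {g | ∀ a, 0 < g a}

def probSet (Y : Type*) [Fintype Y] : Set (Y → ℝ) :=
  {p | (∀ y, 0 < p y) ∧ ∑ y, p y = 1}

noncomputable def DPhi {Y : Type*} [Fintype Y] [DecidableEq Y]
    (G : SimpleGraph Y) [DecidableRel G.Adj] (Y0 : Finset Y)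
    (φ : ∀ y : Y, (↥(G.neighborSet y) → ℝ) → ℝ) (f g : Y → ℝ) : ℝ :=
  ∑ y ∈ Y0, f y * bregman (φ y) (fun z => f z.1 / f y) (fun z => g z.1 / g y)

def nbd {Y : Type*} (G : SimpleGraph Y) (y : Y) : Set Y := insert y (G.neighborSet y)

/-- Graph `G₀` on a vertex subset: edges when closed neighborhoods intersect. -/
def overlapGraph {Y : Type*} (G : SimpleGraph Y) (Y0 : Set Y) : SimpleGraph Y0 where
  Adj a b := a ≠ b ∧ (nbd G a.1 ∩ nbd G b.1).Nonempty
  symm := ⟨by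
    intro a b h
    exact ⟨h.1.symm, by rw [Set.inter_comm]; exact h.2⟩⟩
  loopless := ⟨fun a h => h.1 rfl⟩

/-- Graph `G₀'` on a vertex subset: edges when open neighborhoods intersect. -/
def bOverlapGraph {Y : Type*} (G : SimpleGraph Y) (Y0 : Set Y) : SimpleGraph Y0 where
  Adj a b := a ≠ b ∧ (G.neighborSet a.1 ∩ G.neighborSet b.1).Nonempty
  symm := ⟨by
    intro a b h
    exact ⟨h.1.symm, by rw [Set.inter_comm]; exact h.2⟩⟩
  loopless := ⟨fun a h => h.1 rfl⟩

noncomputable def psPot (γ : ℝ) {A : Type*} [Fintype A] (f : A → ℝ) : ℝ :=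
  (∑ a, f a ^ (1 + γ)) ^ (1 / (1 + γ))

lemma psPot_fderiv_single {A : Type*} [Fintype A] [DecidableEq A] [Nonempty A] {γ : ℝ}
    (hγ : 0 < γ) (g : A → ℝ) (hg : ∀ a, 0 < g a) (a : A) :
    fderiv ℝ (psPot γ) g (Pi.single a 1) =
      (∑ b, g b ^ (1 + γ)) ^ (1 / (1 + γ) - 1) * g a ^ γ := by
  have hp1 : (0:ℝ) < 1 + γ := by linarith
  set S : ℝ := ∑ b, g b ^ (1 + γ) with hS
  have hSpos : 0 < S :=
    Finset.sum_pos (fun b _ => Real.rpow_pos_of_pos (hg b) _) Finset.univ_nonempty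
  have hinner : HasFDerivAt (fun f : A → ℝ => ∑ b, f b ^ (1 + γ))
      (∑ b, ((1 + γ) * g b ^ γ) • ContinuousLinearMap.proj (R := ℝ) (φ := fun _ : A => ℝ) b) g := by
    apply HasFDerivAt.fun_sum
    intro b _
    have h1 : HasDerivAt (fun x : ℝ => x ^ (1 + γ)) ((1 + γ) * g b ^ ((1 + γ) - 1)) (g b) :=
      Real.hasDerivAt_rpow_const (Or.inl (hg b).ne')
    have he : (1:ℝ) + γ - 1 = γ := by ring
    rw [he] at h1
    exact h1.comp_hasFDerivAt g (hasFDerivAt_apply (𝕜 := ℝ) (F' := fun _ : A => ℝ) b g)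
  have houter : HasDerivAt (fun x : ℝ => x ^ (1 / (1 + γ)))
      ((1 / (1 + γ)) * S ^ (1 / (1 + γ) - 1)) S :=
    Real.hasDerivAt_rpow_const (Or.inl hSpos.ne')
  have hcomp := houter.comp_hasFDerivAt g hinner
  have hfd : fderiv ℝ (psPot γ) g =
      ((1 / (1 + γ)) * S ^ (1 / (1 + γ) - 1)) •
        (∑ b, ((1 + γ) * g b ^ γ) • ContinuousLinearMap.proj (R := ℝ) (φ := fun _ : A => ℝ) b) :=
    hcomp.fderiv
  rw [hfd]
  simp only [ContinuousLinearMap.smul_apply, ContinuousLinearMap.sum_apply,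
    ContinuousLinearMap.smul_apply, ContinuousLinearMap.proj_apply, smul_eq_mul,
    Pi.single_apply]
  rw [Finset.sum_congr rfl (fun b _ => by rw [mul_ite, mul_one, mul_zero]),
    Finset.sum_ite_eq' Finset.univ a fun b => (1 + γ) * g b ^ γ]
  simp only [Finset.mem_univ, if_true]
  field_simp

lemma bregman_psPot_key {A : Type*} [Fintype A] [DecidableEq A] {γ : ℝ} (hγ : 0 < γ)
    (f g : A → ℝ) (hf : ∀ a, 0 < f a) (hg : ∀ a, 0 < g a) :
    0 ≤ bregman (psPot γ) f g ∧
      (bregman (psPot γ) f g = 0 → ∀ a b : A, f a * g b = f b * g a) := by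
  have hp1 : (0:ℝ) < 1 + γ := by linarith
  rcases isEmpty_or_nonempty A with hA | hA
  · refine ⟨?_, fun _ a => (IsEmpty.false a).elim⟩
    simp [bregman, psPot, Real.zero_rpow (one_div_ne_zero hp1.ne')]
  · set S : ℝ := ∑ b, g b ^ (1 + γ) with hSdef
    have hSpos : 0 < S :=
      Finset.sum_pos (fun b _ => Real.rpow_pos_of_pos (hg b) _) Finset.univ_nonempty
    set c : ℝ := 1 / (1 + γ) with hcdef
    set w : A → ℝ := fun a => g a ^ (1 + γ) / S with hwdef
    set x : A → ℝ := fun a => f a / g a with hxdef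
    have hw : ∀ a, 0 < w a := fun a => div_pos (Real.rpow_pos_of_pos (hg a) _) hSpos
    have hw1 : ∑ a, w a = 1 := by
      rw [hwdef]; rw [← Finset.sum_div]; exact div_self hSpos.ne'
    have hx : ∀ a, 0 < x a := fun a => div_pos (hf a) (hg a)
    set E : ℝ := ∑ a, w a * x a with hEdef
    set M : ℝ := ∑ a, w a * x a ^ (1 + γ) with hMdef
    have hEpos : 0 < E := Finset.sum_pos
      (fun a _ => mul_pos (hw a) (hx a)) Finset.univ_nonempty
    have hMpos : 0 < M := Finset.sum_pos
      (fun a _ => mul_pos (hw a) (Real.rpow_pos_of_pos (hx a) _)) Finset.univ_nonempty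
    -- rewrite bregman
    have hfx : ∀ a, f a ^ (1 + γ) = S * (w a * x a ^ (1 + γ)) := by
      intro a
      have : f a = g a * x a := by
        rw [hxdef, eq_comm, mul_comm, div_mul_cancel₀ _ (hg a).ne']
      rw [this, Real.mul_rpow (hg a).le (hx a).le, hwdef]
      field_simp
    have hpsf : psPot γ f = S ^ c * M ^ c := by
      rw [psPot]
      rw [Finset.sum_congr rfl (fun a _ => hfx a), ← Finset.mul_sum, ← hMdef,
        Real.mul_rpow hSpos.le hMpos.le, hcdef]
    have hT : ∀ a, g a ^ γ * (f a - g a) = S * (w a * x a) - g a ^ (1 + γ) := by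
      intro a
      have h1 : g a ^ (1 + γ) = g a ^ γ * g a := by
        rw [add_comm, Real.rpow_add_one (hg a).ne']
      rw [hwdef, hxdef, mul_sub, h1]
      field_simp [hSpos.ne', (hg a).ne']
      rw [h1]
      ring
    have hbr : bregman (psPot γ) f g = S ^ c * (M ^ c - E) := by
      rw [bregman]
      rw [Finset.sum_congr rfl (fun a _ => by
        rw [psPot_fderiv_single hγ g hg a, ← hSdef, ← hcdef, mul_assoc, hT a])]
      rw [← Finset.mul_sum, Finset.sum_sub_distrib]
      have hsum : (∑ a, S * (w a * x a)) = S * E := by rw [hEdef, Finset.mul_sum]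
      rw [hsum, ← hSdef]
      have hpsg : psPot γ g = S ^ c := by rw [psPot, ← hSdef, hcdef]
      have hSc1 : S ^ (c - 1) * (S * E - S) = S ^ c * E - S ^ c := by
        have : S ^ (c - 1) * S = S ^ c := by
          rw [← Real.rpow_add_one hSpos.ne' (c - 1)]; ring_nf
        rw [mul_sub, ← mul_assoc, this]
      rw [hpsf, hpsg, hSc1]
      ring
    -- Jensen
    have hJ : E ^ (1 + γ) ≤ M := by
      rw [hEdef, hMdef]
      exact Real.rpow_arith_mean_le_arith_mean_rpow Finset.univ w x
        (fun i _ => (hw i).le) hw1 (fun i _ => (hx i).le) (by linarith)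
    have hEc : (E ^ (1 + γ)) ^ c = E := by
      rw [hcdef, one_div]; exact Real.rpow_rpow_inv hEpos.le hp1.ne'
    have hMc : E ≤ M ^ c := by
      calc E = (E ^ (1 + γ)) ^ c := hEc.symm
        _ ≤ M ^ c := Real.rpow_le_rpow (by positivity) hJ (by positivity)
    constructor
    · rw [hbr]
      have : (0:ℝ) < S ^ c := Real.rpow_pos_of_pos hSpos _
      nlinarith
    · intro hzero a b
      rw [hbr] at hzero
      have hScpos : (0:ℝ) < S ^ c := Real.rpow_pos_of_pos hSpos _
      have hMcE : M ^ c = E := by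
        rcases mul_eq_zero.mp hzero with h | h
        · exact absurd h hScpos.ne'
        · linarith
      have hME : M = E ^ (1 + γ) := by
        have := congrArg (fun t => t ^ (1 + γ)) hMcE
        simpa [hcdef, one_div, Real.rpow_inv_rpow hMpos.le hp1.ne'] using this
      -- strict Jensen equality case
      have hsc : StrictConvexOn ℝ (Set.Ici 0) fun t : ℝ => t ^ (1 + γ) :=
        strictConvexOn_rpow (by linarith)
      have heq : (fun t : ℝ => t ^ (1 + γ)) (∑ i, w i • x i) =
          ∑ i, w i • (fun t : ℝ => t ^ (1 + γ)) (x i) := by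
        simp only [smul_eq_mul]
        rw [← hEdef, ← hMdef, ← hME]
      have hconst := (hsc.map_sum_eq_iff (fun i _ => hw i) hw1
        (fun i _ => (hx i).le)).mp heq
      have hxa := hconst a (Finset.mem_univ a)
      have hxb := hconst b (Finset.mem_univ b)
      have : x a = x b := by rw [hxa, hxb]
      rw [hxdef, div_eq_div_iff (hg a).ne' (hg b).ne'] at this
      exact this

/-- If the open neighborhoods `b(y), y ∈ 𝒴₀` cover `𝒴` and the graph `G₀'`
(edges: `b(y) ∩ b(y') ≠ ∅`) is connected, then the composite local Bregman divergence built
from local pseudo-spherical potentials satisfies the coincidence axiom on `𝒫`. -/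
theorem stmt3 {Y : Type*} [Fintype Y] [DecidableEq Y]
    (G : SimpleGraph Y) [DecidableRel G.Adj] (Y0 : Finset Y)
    (γ : ℝ) (hγ : 0 < γ)
    (hcover : (⋃ y ∈ Y0, G.neighborSet y) = Set.univ)
    (hconn : (bOverlapGraph G (Y0 : Set Y)).Connected)
    (p q : Y → ℝ) (hp : p ∈ probSet Y) (hq : q ∈ probSet Y)
    (h : DPhi G Y0 (fun y => psPot γ (A := ↥(G.neighborSet y))) p q = 0) : p = q := by
  obtain ⟨hp_pos, hp_sum⟩ := hp
  obtain ⟨hq_pos, hq_sum⟩ := hq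
  rw [DPhi] at h
  have hterm : ∀ y ∈ Y0, 0 ≤ p y *
      bregman (psPot γ) (fun z : ↥(G.neighborSet y) => p z.1 / p y)
        (fun z : ↥(G.neighborSet y) => q z.1 / q y) := by
    intro y _
    exact mul_nonneg (hp_pos y).le
      (bregman_psPot_key hγ _ _ (fun a => div_pos (hp_pos _) (hp_pos y))
        (fun a => div_pos (hq_pos _) (hq_pos y))).1
  have hzero := (Finset.sum_eq_zero_iff_of_nonneg hterm).mp h
  -- ratio relation on each neighborhood
  have Hy : ∀ y ∈ (Y0 : Set Y), ∀ z ∈ G.neighborSet y, ∀ u ∈ G.neighborSet y,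
      p z * q u = p u * q z := by
    intro y hy z hz u hu
    have hy' : y ∈ Y0 := hy
    have hb0 : bregman (psPot γ) (fun z : ↥(G.neighborSet y) => p z.1 / p y)
        (fun z : ↥(G.neighborSet y) => q z.1 / q y) = 0 := by
      rcases mul_eq_zero.mp (hzero y hy') with h' | h'
      · exact absurd h' (hp_pos y).ne'
      · exact h'
    have hkey := (bregman_psPot_key hγ _ _ (fun a => div_pos (hp_pos _) (hp_pos y))
      (fun a => div_pos (hq_pos _) (hq_pos y))).2 hb0 ⟨z, hz⟩ ⟨u, hu⟩
    simp only at hkey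
    rw [div_mul_div_comm, div_mul_div_comm,
      div_eq_div_iff (mul_pos (hp_pos y) (hq_pos y)).ne'
        (mul_pos (hp_pos y) (hq_pos y)).ne'] at hkey
    exact mul_right_cancel₀ (mul_pos (hp_pos y) (hq_pos y)).ne' hkey
  -- propagate along walks in the overlap graph
  have Hwalk : ∀ {u v : (Y0 : Set Y)}, (bOverlapGraph G (Y0 : Set Y)).Walk u v →
      ∀ a ∈ G.neighborSet u.1, ∀ b ∈ G.neighborSet v.1, p a * q b = p b * q a := by
    intro u v wk
    induction wk with
    | nil =>
      intro a ha b hb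
      exact Hy _ (Subtype.coe_prop _) a ha b hb
    | @cons u' m v' hadj wk ih =>
      intro a ha b hb
      obtain ⟨mm, hm1, hm2⟩ :=
        (show u' ≠ m ∧ (G.neighborSet u'.1 ∩ G.neighborSet m.1).Nonempty from hadj).2
      have h1 := Hy _ u'.2 a ha mm hm1
      have h2 := ih mm hm2 b hb
      have h3 : (p a * q mm) * (p mm * q b) = (p mm * q a) * (p b * q mm) := by
        rw [h1, h2]
      have h4 : (p mm * q mm) * (p a * q b) = (p mm * q mm) * (p b * q a) := by
        linear_combination h3
      exact mul_left_cancel₀ (mul_pos (hp_pos mm) (hq_pos mm)).ne' h4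
  have Hall : ∀ z u : Y, p z * q u = p u * q z := by
    intro z u
    have hz : z ∈ ⋃ y ∈ Y0, G.neighborSet y := hcover ▸ Set.mem_univ z
    have hu : u ∈ ⋃ y ∈ Y0, G.neighborSet y := hcover ▸ Set.mem_univ u
    obtain ⟨yz, hyz, hzmem⟩ := Set.mem_iUnion₂.mp hz
    obtain ⟨yu, hyu, humem⟩ := Set.mem_iUnion₂.mp hu
    obtain ⟨wk⟩ := hconn.preconnected ⟨yz, hyz⟩ ⟨yu, hyu⟩
    exact Hwalk wk z hzmem u humem
  funext z
  have h1 : ∑ u, p z * q u = ∑ u, p u * q z := Finset.sum_congr rfl fun u _ => Hall z u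
  rw [← Finset.mul_sum, hq_sum, mul_one, ← Finset.sum_mul, hp_sum, one_mul] at h1
  exact h1
end

section
/- Let φ : ℱ → ℝ be a differentiable, convex, and 1-homogeneous function (φ(λf) = λφ(f) for all λ > 0, f ∈ ℱ), and define S(y, f) = −∂_y φ(f). Then S is a proper homogeneous score: S(y, λf) = S(y, f) for all λ > 0, the expected score satisfies S(p, q) ≥ S(p, p) for all p, q ∈ 𝒫, and φ(p) = −S(p, p) = −Σ_{y∈𝒴} p_y S(y, p) for p ∈ 𝒫, i.e. φ is the potential of S. -/
open scoped BigOperators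
open Filter Topology

section aux
variable {Y : Type*} [Fintype Y] [DecidableEq Y]

lemma isOpen_posOrth : IsOpen {g : Y → ℝ | ∀ a, 0 < g a} := by
  have : {g : Y → ℝ | ∀ a, 0 < g a} = ⋂ a, (fun g : Y → ℝ => g a) ⁻¹' Set.Ioi 0 := by
    ext g; simp [Set.mem_iInter]
  rw [this]
  exact isOpen_iInter_of_finite fun a => (continuous_apply a).isOpen_preimage _ isOpen_Ioi

lemma fderiv_apply_sum (φ : (Y → ℝ) → ℝ) (f g : Y → ℝ) :
    fderiv ℝ φ f g = ∑ y, g y * fderiv ℝ φ f (Pi.single y 1) := by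
  have h : g = ∑ y, g y • (Pi.single y 1 : Y → ℝ) := by
    funext a
    simp [Finset.sum_apply, Pi.single_apply]
  conv_lhs => rw [h]
  rw [map_sum]
  simp [smul_eq_mul]

end aux

section main
variable {Y : Type*} [Fintype Y] [DecidableEq Y]
variable (φ : (Y → ℝ) → ℝ)
  (hdiff : DifferentiableOn ℝ φ {g : Y → ℝ | ∀ a, 0 < g a})
  (hhom : ∀ lam : ℝ, 0 < lam → ∀ f, (∀ a, 0 < f a) → φ (lam • f) = lam * φ f)

include hdiff in
lemma diffAt {f : Y → ℝ} (hf : ∀ a, 0 < f a) : DifferentiableAt ℝ φ f :=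
  hdiff.differentiableAt (isOpen_posOrth.mem_nhds hf)

include hdiff hhom in
lemma euler {f : Y → ℝ} (hf : ∀ a, 0 < f a) : fderiv ℝ φ f f = φ f := by
  have hs : HasDerivAt (fun t : ℝ => t • f) f 1 := by
    simpa using (hasDerivAt_id (1:ℝ)).smul_const f
  have h1 : HasDerivAt (fun t : ℝ => φ (t • f)) (fderiv ℝ φ f f) 1 := by
    have hφ : HasFDerivAt φ (fderiv ℝ φ f) ((1:ℝ) • f) := by
      simpa using (diffAt φ hdiff hf).hasFDerivAt
    exact hφ.comp_hasDerivAt 1 hs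
  have hev : (fun t : ℝ => φ (t • f)) =ᶠ[𝓝 (1:ℝ)] fun t => t * φ f := by
    filter_upwards [Ioi_mem_nhds (zero_lt_one)] with t ht
    exact hhom t ht f hf
  have h2 : HasDerivAt (fun t : ℝ => t * φ f) (fderiv ℝ φ f f) 1 :=
    h1.congr_of_eventuallyEq hev.symm
  have h3 : HasDerivAt (fun t : ℝ => t * φ f) (φ f) 1 := by
    simpa using (hasDerivAt_id (1:ℝ)).mul_const (φ f)
  exact h2.unique h3

include hdiff hhom in
lemma grad_hom {f : Y → ℝ} (hf : ∀ a, 0 < f a) {lam : ℝ} (hlam : 0 < lam) (v : Y → ℝ) :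
    fderiv ℝ φ (lam • f) v = fderiv ℝ φ f v := by
  have hlf : ∀ a, 0 < (lam • f) a := fun a => by
    simpa using mul_pos hlam (hf a)
  have hsm : HasFDerivAt (fun g : Y → ℝ => lam • g)
      (lam • ContinuousLinearMap.id ℝ (Y → ℝ)) f :=
    (ContinuousLinearMap.id ℝ (Y → ℝ)).hasFDerivAt.const_smul lam
  have h1 : HasFDerivAt (fun g : Y → ℝ => φ (lam • g))
      ((fderiv ℝ φ (lam • f)).comp (lam • ContinuousLinearMap.id ℝ (Y → ℝ))) f :=
    ((diffAt φ hdiff hlf).hasFDerivAt).comp f hsm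
  have hev : (fun g : Y → ℝ => φ (lam • g)) =ᶠ[𝓝 f] fun g => lam * φ g := by
    filter_upwards [isOpen_posOrth.mem_nhds hf] with g hg
    exact hhom lam hlam g hg
  have h2 : HasFDerivAt (fun g : Y → ℝ => lam * φ g)
      ((fderiv ℝ φ (lam • f)).comp (lam • ContinuousLinearMap.id ℝ (Y → ℝ))) f :=
    h1.congr_of_eventuallyEq hev.symm
  have h3 : HasFDerivAt (fun g : Y → ℝ => lam * φ g)
      (lam • fderiv ℝ φ f) f := by
    exact ((diffAt φ hdiff hf).hasFDerivAt).const_smul lam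
  have h4 := h2.unique h3
  have h5 : lam * fderiv ℝ φ (lam • f) v = lam * fderiv ℝ φ f v := by
    have := congrArg (fun (L : (Y → ℝ) →L[ℝ] ℝ) => L v) h4
    simpa [smul_eq_mul, mul_comm] using this
  exact mul_left_cancel₀ hlam.ne' h5

include hdiff in
lemma subgrad (hconv : ConvexOn ℝ {g : Y → ℝ | ∀ a, 0 < g a} φ)
    {p q : Y → ℝ} (hp : ∀ a, 0 < p a) (hq : ∀ a, 0 < q a) :
    fderiv ℝ φ q (p - q) ≤ φ p - φ q := by
  set ψ : ℝ → ℝ := fun t => φ (q + t • (p - q)) with hψ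
  have hderiv : HasDerivAt ψ (fderiv ℝ φ q (p - q)) 0 := by
    have hs : HasDerivAt (fun t : ℝ => q + t • (p - q)) (p - q) 0 := by
      simpa using ((hasDerivAt_id (0:ℝ)).smul_const (p - q)).const_add q
    have hφ : HasFDerivAt φ (fderiv ℝ φ q) (q + (0:ℝ) • (p - q)) := by
      simpa using (diffAt φ hdiff hq).hasFDerivAt
    exact hφ.comp_hasDerivAt 0 hs
  have hslope : Tendsto (slope ψ 0) (𝓝[>] (0:ℝ)) (𝓝 (fderiv ℝ φ q (p - q))) :=
    (hasDerivAt_iff_tendsto_slope.mp hderiv).mono_left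
      (nhdsWithin_mono 0 (fun t ht => ne_of_gt ht))
  refine le_of_tendsto hslope ?_
  filter_upwards [Ioo_mem_nhdsGT_of_mem (Set.left_mem_Ico.mpr zero_lt_one)] with t ht
  have ht0 : 0 < t := ht.1
  have ht1 : t ≤ 1 := ht.2.le
  have hcomb : q + t • (p - q) = (1 - t) • q + t • p := by
    module
  have hb : ψ t ≤ (1 - t) * φ q + t * φ p := by
    rw [hψ]; simp only; rw [hcomb]
    simpa [smul_eq_mul] using
      hconv.2 hq hp (by linarith) ht0.le (by ring)
  have hψ0 : ψ 0 = φ q := by simp [hψ]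
  rw [slope_def_field, div_le_iff₀ (by simpa using ht0)]
  rw [hψ0] at *
  nlinarith [hb]

end main

/-- For a differentiable, convex, positively 1-homogeneous potential `φ`,
the score `S(y, f) = −∂_y φ(f)` is homogeneous (`S(y, λf) = S(y, f)` for `λ > 0`),
proper (`S(p, q) ≥ S(p, p)` on `𝒫`), and `φ(p) = −S(p,p) = −Σ_y p_y S(y, p)` on `𝒫`. -/
theorem stmt10 {Y : Type*} [Fintype Y] [DecidableEq Y]
    (φ : (Y → ℝ) → ℝ)
    (hdiff : DifferentiableOn ℝ φ (posOrth Y))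
    (hconv : ConvexOn ℝ (posOrth Y) φ)
    (hhom : ∀ lam : ℝ, 0 < lam → ∀ f ∈ posOrth Y, φ (lam • f) = lam * φ f) :
    (∀ (y : Y) (lam : ℝ), 0 < lam → ∀ f ∈ posOrth Y,
      -(fderiv ℝ φ (lam • f) (Pi.single y 1)) = -(fderiv ℝ φ f (Pi.single y 1))) ∧
    (∀ p ∈ probSet Y, ∀ q ∈ probSet Y,
      (∑ y : Y, p y * -(fderiv ℝ φ q (Pi.single y 1)))
        ≥ ∑ y : Y, p y * -(fderiv ℝ φ p (Pi.single y 1))) ∧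
    (∀ p ∈ probSet Y,
      φ p = -∑ y : Y, p y * -(fderiv ℝ φ p (Pi.single y 1))) := by
  have hhom' : ∀ lam : ℝ, 0 < lam → ∀ f, (∀ a, 0 < f a) → φ (lam • f) = lam * φ f :=
    fun lam hl f hf => hhom lam hl f hf
  have key : ∀ p : Y → ℝ, (∀ a, 0 < p a) →
      φ p = ∑ y, p y * fderiv ℝ φ p (Pi.single y 1) := fun p hp => by
    rw [← fderiv_apply_sum, euler φ hdiff hhom' hp]
  refine ⟨fun y lam hl f hf => by rw [grad_hom φ hdiff hhom' hf hl], ?_, ?_⟩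
  · intro p hp q hq
    have h1 : fderiv ℝ φ q (p - q) ≤ φ p - φ q :=
      subgrad φ hdiff hconv hp.1 hq.1
    have h2 : fderiv ℝ φ q p - φ q ≤ φ p - φ q := by
      have := (fderiv ℝ φ q).map_sub p q
      rw [euler φ hdiff hhom' hq.1] at this
      linarith [this ▸ h1]
    have h3 : fderiv ℝ φ q p ≤ fderiv ℝ φ p p := by
      rw [euler φ hdiff hhom' hp.1]; linarith
    rw [fderiv_apply_sum φ q p, fderiv_apply_sum φ p p] at h3
    simp only [mul_neg, Finset.sum_neg_distrib, ge_iff_le, neg_le_neg_iff]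
    exact h3
  · intro p hp
    simp only [mul_neg, Finset.sum_neg_distrib, neg_neg]
    exact key p hp.1
end
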